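/- arXiv:1302.5744 — 4 statements merged into one kernel-verified Lean document; each statement's English description precedes it below -/
import Mathlib

section
/- For all n ≥ 1, the number of partitions of n whose parts all occur with the same multiplicity equals the sum over divisors d of n of the number of partitions of d into distinct parts: Q̂(n) = ∑_{d|n} Q(d). -/
/-- `Q n`: the number of partitions of `n` into distinct parts. -/
def Q (n : ℕ) : ℕ := (Nat.Partition.distincts n).card

/-- `Qhat n`: the number of partitions of `n` in which every part occurs with
the same multiplicity. -/
def Qhat (n : ℕ) : ℕ :=
  (Finset.univ.filter fun p : Nat.Partition n =>
    ∀ i ∈ p.parts, ∀ j ∈ p.parts, p.parts.count i = p.parts.count j).card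

private lemma multiset_sum_nsmul' (m : ℕ) (s : Multiset ℕ) : (m • s).sum = m * s.sum := by
  induction m with
  | zero => simp
  | succ k ih => rw [succ_nsmul, Multiset.sum_add, ih, Nat.succ_mul]

/-- shrink a partition to the partition of distinct parts -/
private def shrinkP {n : ℕ} (q : Nat.Partition n) : Nat.Partition q.parts.dedup.sum :=
  ⟨q.parts.dedup, fun h => q.parts_pos (Multiset.mem_dedup.1 h), rfl⟩

/-- blow up a partition of a divisor `d` of `n` to a partition of `n` -/
private def blowP (n d : ℕ) (hd : d ∈ n.divisors) (p : Nat.Partition d) : Nat.Partition n :=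
  ⟨(n / d) • p.parts,
   fun h => p.parts_pos (Multiset.mem_nsmul.1 h).2,
   by rw [multiset_sum_nsmul', p.parts_sum,
        Nat.div_mul_cancel (Nat.mem_divisors.1 hd).1]⟩

private lemma sigma_part_eq {d₁ d₂ : ℕ} {p₁ : Nat.Partition d₁} {p₂ : Nat.Partition d₂}
    (h : p₁.parts = p₂.parts) :
    (⟨d₁, p₁⟩ : Σ d, Nat.Partition d) = ⟨d₂, p₂⟩ := by
  have hd : d₁ = d₂ := by rw [← p₁.parts_sum, ← p₂.parts_sum, h]
  subst hd
  rw [Nat.Partition.ext h]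

private lemma key (n : ℕ) (hn : 1 ≤ n) (q : Nat.Partition n)
    (h : ∀ i ∈ q.parts, ∀ j ∈ q.parts, q.parts.count i = q.parts.count j) :
    q.parts = (n / q.parts.dedup.sum) • q.parts.dedup ∧ q.parts.dedup.sum ∣ n := by
  obtain ⟨a₀, ha₀⟩ : ∃ a, a ∈ q.parts := by
    by_contra hc
    push_neg at hc
    have h0 : q.parts = 0 := Multiset.eq_zero_of_forall_notMem hc
    have := q.parts_sum
    rw [h0] at this
    simp at this
    omega
  set m := q.parts.count a₀ with hm
  have hq : q.parts = m • q.parts.dedup := by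
    ext b
    rw [Multiset.count_nsmul, Multiset.count_dedup]
    by_cases hb : b ∈ q.parts
    · simp [hb, h b hb a₀ ha₀, hm]
    · simp [hb, Multiset.count_eq_zero_of_notMem hb]
  set d := q.parts.dedup.sum with hd
  have hnm : n = m * d :=
    calc n = q.parts.sum := q.parts_sum.symm
    _ = (m • q.parts.dedup).sum := by rw [← hq]
    _ = m * d := multiset_sum_nsmul' _ _
  have hd0 : 0 < d := by
    rcases Nat.eq_zero_or_pos d with h0 | h0
    · rw [h0, Nat.mul_zero] at hnm; omega
    · exact h0
  have hdiv : n / d = m := by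
    rw [hnm]; exact Nat.mul_div_cancel _ hd0
  exact ⟨by rw [hdiv, ← hq], ⟨m, by rw [hnm, Nat.mul_comm]⟩⟩

theorem Qhat_eq_sum_divisors_Q (n : ℕ) (hn : 1 ≤ n) :
    Qhat n = ∑ d ∈ n.divisors, Q d := by
  classical
  have hns : ∑ d ∈ n.divisors, Q d
      = (n.divisors.sigma fun d => Nat.Partition.distincts d).card :=
    (Finset.card_sigma _ _).symm
  rw [hns, Qhat]
  refine Finset.card_bij'
    (fun q _ => (⟨q.parts.dedup.sum, shrinkP q⟩ : Σ d, Nat.Partition d))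
    (fun x hx => blowP n x.1 (Finset.mem_sigma.1 hx).1 x.2)
    ?_ ?_ ?_ ?_
  · -- maps into sigma
    intro q hq
    rw [Finset.mem_filter] at hq
    obtain ⟨_, hdvd⟩ := key n hn q hq.2
    rw [Finset.mem_sigma]
    constructor
    · exact Nat.mem_divisors.2 ⟨hdvd, by omega⟩
    · exact Finset.mem_filter.2 ⟨Finset.mem_univ _, Multiset.nodup_dedup _⟩
  · -- maps into filter
    intro x hx
    rw [Finset.mem_sigma] at hx
    obtain ⟨hd, hp⟩ := hx
    have hnodup : x.2.parts.Nodup := (Finset.mem_filter.1 hp).2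
    refine Finset.mem_filter.2 ⟨Finset.mem_univ _, ?_⟩
    intro i hi j hj
    show Multiset.count i ((n / x.1) • x.2.parts) = Multiset.count j ((n / x.1) • x.2.parts)
    rw [Multiset.count_nsmul, Multiset.count_nsmul]
    have hi' := (Multiset.mem_nsmul.1 hi).2
    have hj' := (Multiset.mem_nsmul.1 hj).2
    rw [Multiset.count_eq_one_of_mem hnodup hi', Multiset.count_eq_one_of_mem hnodup hj']
  · -- left inverse
    intro q hq
    rw [Finset.mem_filter] at hq
    obtain ⟨hparts, _⟩ := key n hn q hq.2
    exact Nat.Partition.ext hparts.symm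
  · -- right inverse
    intro x hx
    rw [Finset.mem_sigma] at hx
    obtain ⟨hd, hp⟩ := hx
    have hnodup : x.2.parts.Nodup := (Finset.mem_filter.1 hp).2
    have hd0 : 0 < x.1 := Nat.pos_of_mem_divisors hd
    have hm0 : n / x.1 ≠ 0 := by
      have hle : x.1 ≤ n := Nat.le_of_dvd (by omega) (Nat.mem_divisors.1 hd).1
      have := Nat.div_pos hle hd0
      omega
    have hparts : (shrinkP (blowP n x.1 hd x.2)).parts = x.2.parts := by
      show ((n / x.1) • x.2.parts).dedup = x.2.parts
      rw [Multiset.dedup_nsmul hm0, hnodup.dedup]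
    obtain ⟨d, p⟩ := x
    exact sigma_part_eq hparts
end

section
/- As formal power series, -q·(d/dq) log(∏_{n≥1}(1-q^n)^{Q(n)/n}) = ∑_{n≥1} Q̂(n) q^n, where Q(n) is the number of partitions of n into distinct parts and Q̂(n) is the number of partitions of n whose parts occur with equal multiplicity. -/
open PowerSeries

/-- The formal power series `log (1 - q^n) = -∑_{m ≥ 1} q^{n m} / m` over `ℚ`. -/
noncomputable def logOneSubPow (n : ℕ) : PowerSeries ℚ :=
  PowerSeries.mk fun k => if n ∣ k ∧ k ≠ 0 then -(1 : ℚ) / ((k / n : ℕ) : ℚ) else 0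

/-- The formal logarithm `log ∏_{n ≥ 1} (1-q^n)^{c n} = ∑_{n ≥ 1} c n · log(1 - q^n)`,
defined coefficientwise. -/
noncomputable def logProd (c : ℕ → ℚ) : PowerSeries ℚ :=
  PowerSeries.mk fun k => ∑ n ∈ Finset.Icc 1 k, c n * coeff k (logOneSubPow n)

/-- The operator `q · d/dq`, multiplying the `n`-th coefficient by `n`. -/
noncomputable def qDeriv (F : PowerSeries ℚ) : PowerSeries ℚ :=
  PowerSeries.mk fun n => (n : ℚ) * coeff n F


lemma msum_nsmul (n : ℕ) (s : Multiset ℕ) : (n • s).sum = n * s.sum := by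
  induction n with
  | zero => simp
  | succ m ih => rw [succ_nsmul, Multiset.sum_add, ih, Nat.succ_mul]

lemma eq_nsmul_dedup {s : Multiset ℕ}
    (h : ∀ i ∈ s, ∀ j ∈ s, s.count i = s.count j) {a : ℕ} (ha : a ∈ s) :
    s = (s.count a) • s.dedup := by
  ext b
  rw [Multiset.count_nsmul]
  by_cases hb : b ∈ s
  · rw [Multiset.count_dedup, if_pos hb, mul_one, h b hb a ha]
  · rw [Multiset.count_dedup, if_neg hb, mul_zero, Multiset.count_eq_zero_of_notMem hb]

lemma sigma_part_ext {d₁ d₂ : ℕ} (p₁ : Nat.Partition d₁) (p₂ : Nat.Partition d₂)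
    (h : p₁.parts = p₂.parts) : (⟨d₁, p₁⟩ : Σ d, Nat.Partition d) = ⟨d₂, p₂⟩ := by
  have hd : d₁ = d₂ := by rw [← p₁.parts_sum, ← p₂.parts_sum, h]
  subst hd
  exact congrArg _ (Nat.Partition.ext h)

lemma qhat_eq (k : ℕ) (hk : k ≠ 0) : Qhat k = ∑ d ∈ k.divisors, Q d := by
  classical
  unfold Qhat Q
  rw [← Finset.card_sigma]
  have key : ∀ p : Nat.Partition k,
      (∀ i ∈ p.parts, ∀ j ∈ p.parts, p.parts.count i = p.parts.count j) →
      p.parts = (k / p.parts.dedup.sum) • p.parts.dedup ∧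
        p.parts.dedup.sum ∣ k ∧ p.parts.dedup.sum ≠ 0 := by
    intro p hp
    have hne : p.parts ≠ 0 := by
      intro h0
      exact hk (by rw [← p.parts_sum, h0, Multiset.sum_zero])
    obtain ⟨a, ha⟩ := Multiset.exists_mem_of_ne_zero hne
    have hrep := eq_nsmul_dedup hp ha
    have hsum : p.parts.count a * p.parts.dedup.sum = k := by
      rw [← msum_nsmul, ← hrep, p.parts_sum]
    have hd0 : p.parts.dedup.sum ≠ 0 := by
      intro h0
      rw [h0, mul_zero] at hsum
      exact hk hsum.symm
    have hm : k / p.parts.dedup.sum = p.parts.count a :=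
      Nat.div_eq_of_eq_mul_left (Nat.pos_of_ne_zero hd0) hsum.symm
    refine ⟨by rw [hm]; exact hrep, ⟨p.parts.count a, by rw [mul_comm]; exact hsum.symm⟩, hd0⟩
  refine Finset.card_bij'
    (fun p hp => ⟨p.parts.dedup.sum,
      ⟨p.parts.dedup, fun {i} hi => p.parts_pos (Multiset.mem_dedup.mp hi), rfl⟩⟩)
    (fun x hx => ⟨(k / x.1) • x.2.parts,
      fun {i} hi => x.2.parts_pos (Multiset.mem_of_mem_nsmul hi), by
        obtain ⟨hdvd, -⟩ := Nat.mem_divisors.mp (Finset.mem_sigma.mp hx).1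
        rw [msum_nsmul, x.2.parts_sum, Nat.div_mul_cancel hdvd]⟩)
    ?_ ?_ ?_ ?_
  · intro p hp
    rw [Finset.mem_filter] at hp
    obtain ⟨hrep, hdvd, hd0⟩ := key p hp.2
    rw [Finset.mem_sigma]
    refine ⟨Nat.mem_divisors.mpr ⟨hdvd, hk⟩, ?_⟩
    simp [Nat.Partition.distincts, Multiset.nodup_dedup]
  · rintro ⟨d, p⟩ hx
    rw [Finset.mem_sigma] at hx
    obtain ⟨hdvd, -⟩ := Nat.mem_divisors.mp hx.1
    have hnodup : p.parts.Nodup := by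
      have := hx.2
      simpa [Nat.Partition.distincts] using this
    rw [Finset.mem_filter]
    refine ⟨Finset.mem_univ _, ?_⟩
    intro i hi j hj
    simp only [Multiset.count_nsmul]
    rw [Multiset.count_eq_one_of_mem hnodup (Multiset.mem_of_mem_nsmul hi),
      Multiset.count_eq_one_of_mem hnodup (Multiset.mem_of_mem_nsmul hj)]
  · intro p hp
    rw [Finset.mem_filter] at hp
    obtain ⟨hrep, hdvd, hd0⟩ := key p hp.2
    exact Nat.Partition.ext hrep.symm
  · rintro ⟨d, p⟩ hx
    rw [Finset.mem_sigma] at hx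
    obtain ⟨hdvd, -⟩ := Nat.mem_divisors.mp hx.1
    have hnodup : p.parts.Nodup := by
      have := hx.2
      simpa [Nat.Partition.distincts] using this
    have hd0 : d ≠ 0 := by
      rintro rfl
      exact hk (Nat.eq_zero_of_zero_dvd hdvd)
    have hm0 : k / d ≠ 0 := (Nat.div_ne_zero_iff_of_dvd hdvd).mpr ⟨hk, hd0⟩
    apply sigma_part_ext
    simp only []
    rw [Multiset.dedup_nsmul hm0, Multiset.dedup_eq_self.mpr hnodup]

/-- `-q (d/dq) log ∏_{n≥1} (1-q^n)^{Q(n)/n} = ∑_{n≥1} Q̂(n) q^n`. -/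
theorem neg_qDeriv_logProd_Q :
    -qDeriv (logProd fun n => (Q n : ℚ) / (n : ℚ)) =
      PowerSeries.mk fun n => if n = 0 then 0 else (Qhat n : ℚ) := by
  classical
  ext k
  simp only [map_neg, qDeriv, logProd, logOneSubPow, coeff_mk]
  by_cases hk : k = 0
  · subst hk; simp
  rw [if_neg hk, qhat_eq k hk]
  have hdiv : k.divisors = Finset.filter (· ∣ k) (Finset.Icc 1 k) := by
    rw [Nat.divisors, Finset.Ico_add_one_right_eq_Icc]
  simp only [hk, ne_eq, not_false_iff, and_true, mul_ite, mul_zero]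
  rw [← Finset.sum_filter, ← hdiv, Finset.mul_sum, ← Finset.sum_neg_distrib]
  push_cast
  refine Finset.sum_congr rfl fun d hd => ?_
  obtain ⟨hdvd, -⟩ := Nat.mem_divisors.mp hd
  have hd0 : d ≠ 0 := by rintro rfl; exact hk (Nat.eq_zero_of_zero_dvd hdvd)
  have h1 : (d : ℚ) ≠ 0 := Nat.cast_ne_zero.mpr hd0
  have h2 : ((k / d : ℕ) : ℚ) ≠ 0 :=
    Nat.cast_ne_zero.mpr ((Nat.div_ne_zero_iff_of_dvd hdvd).mpr ⟨hk, hd0⟩)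
  have h3 : (d : ℚ) * ((k / d : ℕ) : ℚ) = (k : ℚ) := by
    rw [← Nat.cast_mul, Nat.mul_div_cancel' hdvd]
  have h4 : (Q d : ℚ) / d * (-1 / ((k / d : ℕ) : ℚ)) = -(Q d : ℚ) / k := by
    rw [div_mul_div_comm, h3]
    ring
  rw [h4]
  have hkq : (k : ℚ) ≠ 0 := Nat.cast_ne_zero.mpr hk
  field_simp
end

section
/- For every positive integer a and every N ≥ 1, b_a(N) = ∑_{j≥1} μ(j) b̂_{aj}(N), where μ is the Möbius function. -/
open PowerSeries

/-- The Pochhammer symbol `(q)_n = ∏_{k=1}^n (1 - q^k)` as a formal power series over `ℚ`. -/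
noncomputable def poch (n : ℕ) : PowerSeries ℚ :=
  ∏ k ∈ Finset.Icc 1 n, (1 - (X : PowerSeries ℚ) ^ k)

/-- `B_m(q) = ∑_{n ≥ 1} q^{n² + m n} / (q)_n²`, defined coefficientwise (each coefficient
is a finite sum since the `n`-th summand has order at least `n² + m n > N` for `n > N`). -/
noncomputable def Bser (m : ℕ) : PowerSeries ℚ :=
  PowerSeries.mk fun N => ∑ n ∈ Finset.Icc 1 N,
    coeff N (X ^ (n ^ 2 + m * n) * ((poch n)⁻¹) ^ 2)

/-- `B̂_a(q) = ∑_{n ≥ 1} q^{n² + a n} / ((q)_n² (1 - q^{a n}))`, defined coefficientwise. -/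
noncomputable def BserHat (a : ℕ) : PowerSeries ℚ :=
  PowerSeries.mk fun N => ∑ n ∈ Finset.Icc 1 N,
    coeff N (X ^ (n ^ 2 + a * n) * ((poch n)⁻¹) ^ 2 * (1 - (X : PowerSeries ℚ) ^ (a * n))⁻¹)

/-- `b_m(N)`: the `N`-th coefficient of `B_m(q)`. -/
noncomputable def bCoeff (m N : ℕ) : ℚ := coeff N (Bser m)

/-- `b̂_a(N)`: the `N`-th coefficient of `B̂_a(q)`. -/
noncomputable def bCoeffHat (a N : ℕ) : ℚ := coeff N (BserHat a)

/-- geometric series -/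
lemma geom_inv (c : ℕ) (hc : 1 ≤ c) :
    ((1 - (X : PowerSeries ℚ) ^ c))⁻¹
      = PowerSeries.mk (fun M => if c ∣ M then 1 else 0) := by
  rw [PowerSeries.inv_eq_iff_mul_eq_one]
  · ext N
    rw [mul_sub, mul_one, map_sub, PowerSeries.coeff_mul_X_pow', coeff_mk,
      PowerSeries.coeff_one]
    by_cases hN : N = 0
    · subst hN
      rw [if_pos (dvd_zero c), if_neg (show ¬ c ≤ 0 by omega), if_pos rfl]; ring
    · rw [if_neg hN]
      by_cases hdvd : c ∣ N
      · have hle : c ≤ N := Nat.le_of_dvd (by omega) hdvd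
        rw [if_pos hdvd, if_pos hle, coeff_mk, if_pos (Nat.dvd_sub hdvd dvd_rfl)]; ring
      · rw [if_neg hdvd]
        by_cases h1 : c ≤ N
        · rw [if_pos h1, coeff_mk, if_neg, sub_zero]
          intro hd
          have h2 : c ∣ N := by
            have := Nat.dvd_add hd (dvd_refl c)
            rwa [Nat.sub_add_cancel h1] at this
          exact hdvd h2
        · rw [if_neg h1]; ring
  · have h : (PowerSeries.constantCoeff) ((1 : PowerSeries ℚ) - X ^ c) = 1 := by
      rw [map_sub, map_one, ← coeff_zero_eq_constantCoeff, coeff_X_pow,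
        if_neg (show ¬ (0 : ℕ) = c by omega)]
      ring
    rw [h]; norm_num

lemma hatCoeff (n c N : ℕ) (hn : 1 ≤ n) (hc : 1 ≤ c) :
    coeff N (X ^ (n ^ 2 + c * n) * ((poch n)⁻¹) ^ 2 * (1 - (X : PowerSeries ℚ) ^ (c * n))⁻¹)
      = ∑ p ∈ Finset.HasAntidiagonal.antidiagonal N,
          coeff p.1 (X ^ (n ^ 2) * ((poch n)⁻¹) ^ 2) *
            (if c * n ∣ p.2 ∧ 1 ≤ p.2 then 1 else 0) := by
  have hcn : 1 ≤ c * n := Nat.one_le_iff_ne_zero.mpr (by positivity)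
  rw [geom_inv _ hcn, pow_add,
    show (X : PowerSeries ℚ) ^ (n ^ 2) * X ^ (c * n) * ((poch n)⁻¹) ^ 2 *
        PowerSeries.mk (fun M => if c * n ∣ M then 1 else 0)
      = (X ^ (n ^ 2) * ((poch n)⁻¹) ^ 2) *
        (X ^ (c * n) * PowerSeries.mk (fun M => if c * n ∣ M then 1 else 0)) by ring,
    PowerSeries.coeff_mul]
  refine Finset.sum_congr rfl fun p hp => ?_
  congr 1
  rw [PowerSeries.coeff_X_pow_mul']
  by_cases h1 : c * n ≤ p.2
  · rw [if_pos h1]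
    by_cases h2 : c * n ∣ p.2 - c * n
    · rw [coeff_mk, if_pos h2, if_pos]
      refine ⟨?_, by omega⟩
      have := Nat.dvd_add h2 (dvd_refl (c * n))
      rwa [Nat.sub_add_cancel h1] at this
    · rw [coeff_mk, if_neg h2, if_neg]
      rintro ⟨hd, -⟩
      exact h2 (Nat.dvd_sub hd dvd_rfl)
  · rw [if_neg h1, if_neg]
    rintro ⟨hd, hl⟩
    exact h1 (Nat.le_of_dvd (by omega) hd)

lemma plainCoeff (n t N : ℕ) :
    coeff N (X ^ (n ^ 2 + t) * ((poch n)⁻¹) ^ 2)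
      = ∑ p ∈ Finset.HasAntidiagonal.antidiagonal N,
          coeff p.1 (X ^ (n ^ 2) * ((poch n)⁻¹) ^ 2) * (if p.2 = t then 1 else 0) := by
  rw [pow_add,
    show (X : PowerSeries ℚ) ^ (n ^ 2) * X ^ t * ((poch n)⁻¹) ^ 2
      = (X ^ (n ^ 2) * ((poch n)⁻¹) ^ 2) * X ^ t by ring,
    PowerSeries.coeff_mul]
  refine Finset.sum_congr rfl fun p hp => ?_
  rw [PowerSeries.coeff_X_pow]

open ArithmeticFunction ArithmeticFunction.Moebius in
lemma moebius_indicator (c l N : ℕ) (hc : 1 ≤ c) (hl : l ≤ N) :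
    ∑ j ∈ Finset.Icc 1 N, (μ j : ℚ) * (if c * j ∣ l ∧ 1 ≤ l then 1 else 0)
      = if l = c then 1 else 0 := by
  rcases Nat.eq_zero_or_pos l with rfl | hl1
  · rw [if_neg (by omega)]
    exact Finset.sum_eq_zero fun j hj => by rw [if_neg (by omega), mul_zero]
  by_cases hcd : c ∣ l
  · obtain ⟨d, rfl⟩ := hcd
    have hd1 : 1 ≤ d := by
      rcases Nat.eq_zero_or_pos d with rfl | h; · simp at hl1
      · exact h
    have key : ∀ j, c * j ∣ c * d ↔ j ∣ d := fun j =>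
      mul_dvd_mul_iff_left (a := c) (by omega)
    have heq : ∀ j ∈ Finset.Icc 1 N,
        (μ j : ℚ) * (if c * j ∣ c * d ∧ 1 ≤ c * d then 1 else 0)
          = if j ∣ d then (μ j : ℚ) else 0 := by
      intro j hj
      by_cases h : j ∣ d
      · rw [if_pos ⟨(key j).mpr h, hl1⟩, if_pos h, mul_one]
      · rw [if_neg (fun hh => h ((key j).mp hh.1)), if_neg h, mul_zero]
    rw [Finset.sum_congr rfl heq, ← Finset.sum_filter]
    have hfilt : (Finset.Icc 1 N).filter (· ∣ d) = d.divisors := by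
      ext j
      simp only [Finset.mem_filter, Finset.mem_Icc, Nat.mem_divisors]
      constructor
      · rintro ⟨⟨h1, h2⟩, h3⟩; exact ⟨h3, by omega⟩
      · rintro ⟨h1, h2⟩
        have hj1 : 1 ≤ j := Nat.pos_of_dvd_of_pos h1 (by omega)
        have hjd : j ≤ d := Nat.le_of_dvd (by omega) h1
        have hdN : d ≤ N := le_trans (Nat.le_mul_of_pos_left d (by omega)) hl
        exact ⟨⟨hj1, by omega⟩, h1⟩
    rw [hfilt]
    have hz : (∑ j ∈ d.divisors, μ j) = if d = 1 then 1 else 0 := by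
      rw [← coe_mul_zeta_apply, moebius_mul_coe_zeta, one_apply]
    have : (∑ j ∈ d.divisors, (μ j : ℚ)) = ((∑ j ∈ d.divisors, μ j : ℤ) : ℚ) := by push_cast; rfl
    rw [this, hz]
    by_cases hd : d = 1
    · subst hd; rw [if_pos rfl, if_pos (by omega)]; norm_num
    · rw [if_neg hd, if_neg (by
        intro h
        have : c * d = c * 1 := by omega
        exact hd (Nat.eq_of_mul_eq_mul_left (by omega) this))]
      norm_num
  · rw [if_neg (fun h => hcd (by rw [h]))]
    exact Finset.sum_eq_zero fun j hj => by
      rw [if_neg (fun hh => hcd (dvd_trans (Dvd.intro j rfl) hh.1)), mul_zero]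

open ArithmeticFunction ArithmeticFunction.Moebius in
theorem bCoeff_eq_moebius_sum (a N : ℕ) (ha : 1 ≤ a) (hN : 1 ≤ N) :
    bCoeff a N = ∑ j ∈ Finset.Icc 1 N, (μ j : ℚ) * bCoeffHat (a * j) N := by
  unfold bCoeff bCoeffHat Bser BserHat
  simp only [coeff_mk]
  have hRHS : ∀ j ∈ Finset.Icc 1 N,
      (μ j : ℚ) * ∑ n ∈ Finset.Icc 1 N,
          coeff N (X ^ (n ^ 2 + (a * j) * n) * ((poch n)⁻¹) ^ 2 *
            (1 - (X : PowerSeries ℚ) ^ ((a * j) * n))⁻¹)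
        = ∑ n ∈ Finset.Icc 1 N, ∑ p ∈ Finset.HasAntidiagonal.antidiagonal N,
            coeff p.1 (X ^ (n ^ 2) * ((poch n)⁻¹) ^ 2) *
              ((μ j : ℚ) * (if (a * n) * j ∣ p.2 ∧ 1 ≤ p.2 then 1 else 0)) := by
    intro j hj
    rw [Finset.mem_Icc] at hj
    rw [Finset.mul_sum]
    refine Finset.sum_congr rfl fun n hn => ?_
    rw [Finset.mem_Icc] at hn
    rw [hatCoeff n (a * j) N hn.1 (by nlinarith [hj.1]), Finset.mul_sum]
    refine Finset.sum_congr rfl fun p hp => ?_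
    rw [show a * j * n = a * n * j by ring]
    ring
  rw [Finset.sum_congr rfl hRHS, Finset.sum_comm]
  refine Finset.sum_congr rfl fun n hn => ?_
  rw [Finset.mem_Icc] at hn
  rw [show n ^ 2 + a * n = n ^ 2 + a * n from rfl, plainCoeff n (a * n) N, Finset.sum_comm]
  refine Finset.sum_congr rfl fun p hp => ?_
  rw [← Finset.mul_sum, moebius_indicator (a * n) p.2 N (by nlinarith [hn.1])
    (by rw [Finset.HasAntidiagonal.mem_antidiagonal] at hp; omega)]
end

section
/- The generating function identity ∑_{n≥0} p(n) q^n = ∑_{n≥0} q^{n²}/(q)_n² holds as formal power series, where p(n) is the partition function and (q)_n = ∏_{k=1}^n (1-q^k). -/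
open PowerSeries

namespace DurfeeAux

noncomputable section

variable {α : Type*}

open Finset

open scoped Classical

open Finset.HasAntidiagonal

universe u
variable {ι : Type u}


/-- A convenience constructor for the power series whose coefficients indicate a subset. -/
def indicatorSeries (α : Type*) [Semiring α] (s : Set ℕ) : PowerSeries α :=
  PowerSeries.mk fun n => if n ∈ s then 1 else 0

theorem coeff_indicator (s : Set ℕ) [Semiring α] (n : ℕ) :
    coeff n (indicatorSeries α s) = if n ∈ s then 1 else 0 :=
  coeff_mk _ _

theorem coeff_indicator_pos (s : Set ℕ) [Semiring α] (n : ℕ) (h : n ∈ s) :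
    coeff n (indicatorSeries α s) = 1 := by rw [coeff_indicator, if_pos h]

theorem coeff_indicator_neg (s : Set ℕ) [Semiring α] (n : ℕ) (h : n ∉ s) :
    coeff n (indicatorSeries α s) = 0 := by rw [coeff_indicator, if_neg h]

theorem constantCoeff_indicator (s : Set ℕ) [Semiring α] :
    constantCoeff (indicatorSeries α s) = if 0 ∈ s then 1 else 0 :=
  rfl

theorem num_series' [Field α] (i : ℕ) :
    (1 - (X : PowerSeries α) ^ (i + 1))⁻¹ = indicatorSeries α {k | i + 1 ∣ k} := by
  rw [PowerSeries.inv_eq_iff_mul_eq_one]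
  · ext n
    cases n with
    | zero => simp [mul_sub, zero_pow, constantCoeff_indicator]
    | succ n =>
      simp only [coeff_one, if_false, mul_sub, mul_one, coeff_indicator,
        LinearMap.map_sub, reduceCtorEq]
      simp_rw [coeff_mul, coeff_X_pow, coeff_indicator, @boole_mul _ _ _ _]
      simp only [Set.mem_setOf_eq]
      erw [sum_ite, sum_ite]
      simp_rw [@filter_filter _ _ _ _ _, sum_const_zero, add_zero, sum_const, nsmul_eq_mul, mul_one,
        sub_eq_iff_eq_add, zero_add]
      symm
      split_ifs with h
      · suffices #{a ∈ antidiagonal (n + 1) | i + 1 ∣ a.fst ∧ a.snd = i + 1} = 1 by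
          convert congr_arg ((↑) : ℕ → α) this; norm_cast
        rw [card_eq_one]
        cases' h with p hp
        refine ⟨((i + 1) * (p - 1), i + 1), ?_⟩
        ext ⟨a₁, a₂⟩
        simp only [mem_filter, Prod.mk.injEq, Finset.HasAntidiagonal.mem_antidiagonal, mem_singleton]
        constructor
        · rintro ⟨a_left, ⟨a, rfl⟩, rfl⟩
          refine ⟨?_, rfl⟩
          rw [Nat.mul_sub_left_distrib, ← hp, ← a_left, mul_one, Nat.add_sub_cancel]
        · rintro ⟨rfl, rfl⟩
          match p with
          | 0 => rw [mul_zero] at hp; cases hp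
          | p + 1 => rw [hp]; simp [mul_add]
      · suffices #{a ∈ antidiagonal (n + 1) | i + 1 ∣ a.fst ∧ a.snd = i + 1} = 0 by
          convert congr_arg ((↑) : ℕ → α) this; norm_cast
        rw [card_eq_zero]
        apply eq_empty_of_forall_notMem
        simp only [Prod.forall, mem_filter, not_and, Finset.HasAntidiagonal.mem_antidiagonal]
        rintro _ h₁ h₂ ⟨a, rfl⟩ rfl
        apply h
        simp [← h₂]
  · simp [zero_pow]

theorem partialGF_prop (α : Type*) [CommSemiring α] (n : ℕ) (s : Finset ℕ) (hs : ∀ i ∈ s, 0 < i)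
    (c : ℕ → Set ℕ) (hc : ∀ i, i ∉ s → 0 ∈ c i) :
    #{p : n.Partition | (∀ j, p.parts.count j ∈ c j) ∧ ∀ j ∈ p.parts, j ∈ s} =
      coeff n (∏ i ∈ s, indicatorSeries α ((· * i) '' c i)) := by
  simp_rw [coeff_prod, coeff_indicator, prod_boole, sum_boole]
  apply congr_arg
  simp only [mem_univ, forall_true_left, not_and, not_forall, exists_prop,
    Set.mem_image, not_exists]
  set φ : (a : Nat.Partition n) →
    a ∈ filter (fun p ↦ (∀ (j : ℕ), Multiset.count j p.parts ∈ c j) ∧ ∀ j ∈ p.parts, j ∈ s) univ →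
    ℕ →₀ ℕ := fun p _ => {
      toFun := fun i => Multiset.count i p.parts • i
      support := Finset.filter (fun i => i ≠ 0) p.parts.toFinset
      mem_support_toFun := fun a => by
        simp only [smul_eq_mul, ne_eq, mul_eq_zero, Multiset.count_eq_zero]
        rw [not_or, not_not]
        simp only [Multiset.mem_toFinset, not_not, mem_filter] }
  refine Finset.card_bij φ ?_ ?_ ?_
  · intro a ha
    simp only [φ, not_forall, not_exists, not_and, exists_prop, mem_filter]
    rw [mem_finsuppAntidiag]
    dsimp only [ne_eq, smul_eq_mul, id_eq, eq_mpr_eq_cast, le_eq_subset, Finsupp.coe_mk]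
    simp only [mem_univ, forall_true_left, not_and, not_forall, exists_prop,
      mem_filter, true_and] at ha
    refine ⟨⟨?_, fun i ↦ ?_⟩, fun i _ ↦ ⟨a.parts.count i, ha.1 i, rfl⟩⟩
    · conv_rhs => simp [← a.parts_sum]
      rw [sum_multiset_count_of_subset _ s]
      · simp only [smul_eq_mul]
      · intro i
        simp only [Multiset.mem_toFinset, not_not, mem_filter]
        apply ha.2
    · simp only [ne_eq, Multiset.mem_toFinset, not_not, mem_filter, and_imp]
      exact fun hi _ ↦ ha.2 i hi
  · intro p₁ hp₁ p₂ hp₂ h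
    apply Nat.Partition.ext
    simp only [true_and, mem_univ, mem_filter] at hp₁ hp₂
    ext i
    simp only [φ, ne_eq, Multiset.mem_toFinset, not_not, smul_eq_mul, Finsupp.mk.injEq] at h
    by_cases hi : i = 0
    · rw [hi]
      rw [Multiset.count_eq_zero_of_notMem]
      · rw [Multiset.count_eq_zero_of_notMem]
        intro a; exact Nat.lt_irrefl 0 (hs 0 (hp₂.2 0 a))
      intro a; exact Nat.lt_irrefl 0 (hs 0 (hp₁.2 0 a))
    · rw [← mul_left_inj' hi]
      rw [funext_iff] at h
      exact h.2 i
  · simp only [φ, mem_filter, mem_finsuppAntidiag, mem_univ, exists_prop, true_and, and_assoc]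
    rintro f ⟨hf, hf₃, hf₄⟩
    have hf' : f ∈ finsuppAntidiag s n := mem_finsuppAntidiag.mpr ⟨hf, hf₃⟩
    simp only [mem_finsuppAntidiag] at hf'
    refine ⟨⟨∑ i ∈ s, Multiset.replicate (f i / i) i, ?_, ?_⟩, ?_, ?_, ?_⟩
    · intro i hi
      simp only [exists_prop, Multiset.mem_sum, mem_map, Function.Embedding.coeFn_mk] at hi
      rcases hi with ⟨t, ht, z⟩
      apply hs
      rwa [Multiset.eq_of_mem_replicate z]
    · simp_rw [Multiset.sum_sum, Multiset.sum_replicate, Nat.nsmul_eq_mul]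
      rw [← hf'.1]
      refine sum_congr rfl fun i hi => Nat.div_mul_cancel ?_
      rcases hf₄ i hi with ⟨w, _, hw₂⟩
      rw [← hw₂]
      exact dvd_mul_left _ _
    · intro i
      simp_rw [Multiset.count_sum', Multiset.count_replicate, sum_ite_eq']
      split_ifs with h
      · rcases hf₄ i h with ⟨w, hw₁, hw₂⟩
        rwa [← hw₂, Nat.mul_div_cancel _ (hs i h)]
      · exact hc _ h
    · intro i hi
      rw [Multiset.mem_sum] at hi
      rcases hi with ⟨j, hj₁, hj₂⟩
      rwa [Multiset.eq_of_mem_replicate hj₂]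
    · ext i
      simp_rw [Multiset.count_sum', Multiset.count_replicate, sum_ite_eq']
      simp only [ne_eq, Multiset.mem_toFinset, not_not, smul_eq_mul, ite_mul,
        zero_mul, Finsupp.coe_mk]
      split_ifs with h
      · apply Nat.div_mul_cancel
        rcases hf₄ i h with ⟨w, _, hw₂⟩
        apply Dvd.intro_left _ hw₂
      · apply symm
        rw [← Finsupp.notMem_support_iff]
        exact notMem_mono hf'.2 h

end

end DurfeeAux

namespace DurfeeAux

open Finset

noncomputable section

/-- The Gaussian binomial coefficient as a power series over `ℚ`, defined by the
`q`-Pascal recurrence. -/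
def gauss : ℕ → ℕ → PowerSeries ℚ
  | 0, 0 => 1
  | 0, _ + 1 => 0
  | _ + 1, 0 => 1
  | N + 1, n + 1 => gauss N n + X ^ (n + 1) * gauss N (n + 1)

lemma gauss_zero_right (N : ℕ) : gauss N 0 = 1 := by cases N <;> rfl

lemma gauss_succ_succ (N n : ℕ) :
    gauss (N + 1) (n + 1) = gauss N n + X ^ (n + 1) * gauss N (n + 1) := rfl

lemma gauss_eq_zero : ∀ {N n : ℕ}, N < n → gauss N n = 0 := by
  intro N
  induction N with
  | zero =>
    rintro (_ | n) h
    · omega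
    · rfl
  | succ N ih =>
    rintro (_ | n) h
    · omega
    · rw [gauss_succ_succ, ih (by omega), ih (by omega), mul_zero, add_zero]

lemma gauss_self (N : ℕ) : gauss N N = 1 := by
  induction N with
  | zero => rfl
  | succ N ih => rw [gauss_succ_succ, ih, gauss_eq_zero (by omega), mul_zero, add_zero]

lemma geom_succ (N : ℕ) : ∑ k ∈ range (N + 1), (X : PowerSeries ℚ) ^ k
    = 1 + X * ∑ k ∈ range N, (X : PowerSeries ℚ) ^ k := by
  rw [Finset.sum_range_succ' _ N, Finset.mul_sum, pow_zero, add_comm]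
  congr 1
  exact Finset.sum_congr rfl fun x _ => by rw [pow_succ, mul_comm]

lemma gauss_one (N : ℕ) : gauss N 1 = ∑ k ∈ range N, (X : PowerSeries ℚ) ^ k := by
  induction N with
  | zero => rfl
  | succ N ih =>
    rw [gauss_succ_succ, gauss_zero_right, ih, geom_succ]
    simp

/-- The second `q`-Pascal recurrence. -/
lemma gauss_pascal' (N : ℕ) : ∀ n : ℕ,
    gauss (N + 1) (n + 1) = X ^ (N - n) * gauss N n + gauss N (n + 1) := by
  induction N with
  | zero =>
    rintro (_ | n)
    · rw [gauss_succ_succ, gauss_zero_right, gauss_eq_zero Nat.zero_lt_one]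
      simp
    · rw [gauss_eq_zero (by omega), gauss_eq_zero (by omega), gauss_eq_zero (by omega)]
      simp
  | succ N ih =>
    rintro (_ | m)
    · rw [gauss_succ_succ, gauss_zero_right, gauss_one]
      rw [show (0:ℕ) + 1 = 1 from rfl, pow_one, ← geom_succ, Finset.sum_range_succ]
      rw [Nat.sub_zero]
      ring
    · have e1 : gauss (N + 1 + 1) (m + 1 + 1)
          = (X ^ (N - m) * gauss N m + gauss N (m + 1))
            + X ^ (m + 2) * (X ^ (N - (m + 1)) * gauss N (m + 1) + gauss N (m + 2)) := by
        rw [gauss_succ_succ (N + 1) (m + 1), ih m, ih (m + 1)]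
      have e2 : X ^ (N + 1 - (m + 1)) * gauss (N + 1) (m + 1) + gauss (N + 1) (m + 2)
          = X ^ (N - m) * (gauss N m + X ^ (m + 1) * gauss N (m + 1))
            + (gauss N (m + 1) + X ^ (m + 2) * gauss N (m + 2)) := by
        rw [gauss_succ_succ N m, gauss_succ_succ N (m + 1)]
        have h0 : N + 1 - (m + 1) = N - m := by omega
        rw [h0]
      rw [e1, e2]
      rcases le_or_gt (m + 1) N with h | h
      · obtain ⟨a, rfl⟩ : ∃ a, N = m + 1 + a := ⟨N - (m + 1), by omega⟩
        have h3 : m + 1 + a - m = a + 1 := by omega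
        have h4 : m + 1 + a - (m + 1) = a := by omega
        rw [h3, h4]
        ring
      · rw [gauss_eq_zero h, gauss_eq_zero (by omega : N < m + 2)]
        ring

lemma gauss_symm (N : ℕ) : ∀ n : ℕ, n ≤ N → gauss N (N - n) = gauss N n := by
  induction N with
  | zero =>
    intro n hn
    obtain rfl : n = 0 := by omega
    rfl
  | succ N ih =>
    rintro (_ | m) h
    · rw [Nat.sub_zero, gauss_zero_right, gauss_self]
    · have hm : m ≤ N := by omega
      rcases eq_or_lt_of_le hm with rfl | hmN
      · rw [Nat.sub_self, gauss_zero_right, gauss_self]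
      · have h1 : N + 1 - (m + 1) = (N - (m + 1)) + 1 := by omega
        rw [h1, gauss_succ_succ, gauss_pascal' N m]
        have h2 : N - (m + 1) + 1 = N - m := by omega
        rw [h2, ih (m + 1) (by omega), ih m hm]
        ring

end

end DurfeeAux

namespace DurfeeAux

open Finset

noncomputable section

/-- The `q`-Vandermonde identity. -/
lemma gauss_vandermonde (M : ℕ) : ∀ N k : ℕ,
    gauss (M + N) k = ∑ j ∈ range (k + 1),
      X ^ ((M - j) * (k - j)) * (gauss M j * gauss N (k - j)) := by
  intro N
  induction N with
  | zero =>
    intro k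
    rw [Finset.sum_eq_single k]
    · rw [Nat.sub_self, mul_zero, pow_zero, one_mul, gauss_zero_right, mul_one, Nat.add_zero]
    · intro j hj hjk
      have hj' : j < k := by simp at hj; omega
      rw [gauss_eq_zero (show 0 < k - j by omega), mul_zero, mul_zero]
    · intro h
      exact absurd (Finset.self_mem_range_succ k) h
  | succ N ih =>
    rintro (_ | k)
    · rw [Nat.add_zero] at *
      rw [gauss_zero_right]
      simp [gauss_zero_right]
    · -- LHS via second Pascal recurrence and `ih`
      have key : M + (N + 1) = (M + N) + 1 := by omega
      rw [key, gauss_pascal' (M + N) k, ih k, ih (k + 1)]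
      have expand : ∀ j ∈ range (k + 1),
          X ^ ((M - j) * (k + 1 - j)) * (gauss M j * gauss (N + 1) (k + 1 - j))
          = X ^ ((M - j) * (k + 1 - j) + (N - (k - j))) * (gauss M j * gauss N (k - j))
            + X ^ ((M - j) * (k + 1 - j)) * (gauss M j * gauss N (k + 1 - j)) := by
        intro j hj
        have hjk : j ≤ k := by simpa [Nat.lt_succ_iff] using hj
        have h1 : k + 1 - j = (k - j) + 1 := by omega
        rw [h1, gauss_pascal' N (k - j)]
        rw [pow_add]
        ring
      conv_rhs => rw [Finset.sum_range_succ _ (k + 1), Finset.sum_congr rfl expand]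
      rw [Finset.sum_add_distrib]
      rw [Finset.sum_range_succ _ (k + 1)]
      rw [show k + 1 - (k + 1) = 0 from Nat.sub_self _]
      rw [mul_zero, pow_zero, one_mul, gauss_zero_right, mul_one, gauss_zero_right, mul_one]
      have hA : X ^ (M + N - k) * (∑ j ∈ range (k + 1),
            X ^ ((M - j) * (k - j)) * (gauss M j * gauss N (k - j)))
          = ∑ j ∈ range (k + 1),
            X ^ ((M - j) * (k + 1 - j) + (N - (k - j))) * (gauss M j * gauss N (k - j)) := by
        rw [Finset.mul_sum]
        refine Finset.sum_congr rfl fun j hj => ?_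
        have hjk : j ≤ k := by simpa [Nat.lt_succ_iff] using hj
        rcases le_or_gt j M with hjM | hjM
        · rcases le_or_gt (k - j) N with hkN | hkN
          · rw [← mul_assoc, ← pow_add]
            congr 2
            have h1 : k + 1 - j = (k - j) + 1 := by omega
            rw [h1, Nat.mul_succ]
            set t := (M - j) * (k - j) with ht
            omega
          · rw [gauss_eq_zero hkN, mul_zero, mul_zero, mul_zero, mul_zero]
        · simp [gauss_eq_zero hjM]
      rw [hA]
      ring

lemma poch_succ (n : ℕ) : poch (n + 1) = poch n * (1 - X ^ (n + 1)) := by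
  rw [poch, poch, Finset.prod_Icc_succ_top (by omega : 1 ≤ n + 1)]

lemma constantCoeff_poch (n : ℕ) : constantCoeff (poch n) = 1 := by
  rw [poch, map_prod, Finset.prod_eq_one]
  intro k hk
  have hk1 : k ≠ 0 := by
    have := Finset.mem_Icc.mp hk; omega
  simp [zero_pow hk1]

lemma constantCoeff_poch_ne (n : ℕ) : constantCoeff (poch n) ≠ 0 := by
  rw [constantCoeff_poch]; exact one_ne_zero

/-- The Gaussian binomial is congruent to `(poch n)⁻¹` modulo a high power of `X`. -/
lemma poch_mul_gauss : ∀ N n : ℕ, n ≤ N → X ^ (N - n + 1) ∣ poch n * gauss N n - 1 := by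
  intro N
  induction N with
  | zero =>
    intro n hn
    obtain rfl : n = 0 := by omega
    simp [poch, gauss]
  | succ N ih =>
    rintro (_ | m) h
    · rw [gauss_zero_right]
      simp [poch]
    · have hm : m ≤ N := by omega
      have key : poch (m + 1) * gauss (N + 1) (m + 1) - 1
          = (1 - X ^ (m + 1)) * (poch m * gauss N m - 1)
            + X ^ (m + 1) * (poch (m + 1) * gauss N (m + 1) - 1) := by
        rw [gauss_succ_succ, poch_succ]
        ring
      rw [key]
      have hNm : N + 1 - (m + 1) = N - m := by omega
      rw [hNm]
      apply dvd_add
      · exact Dvd.dvd.mul_left (ih m hm) _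
      · have hB : X ^ (N - m) ∣ poch (m + 1) * gauss N (m + 1) - 1 := by
          rcases eq_or_lt_of_le hm with rfl | hmN
          · rw [Nat.sub_self, pow_zero]
            exact one_dvd _
          · have := ih (m + 1) (by omega)
            have he : N - (m + 1) + 1 = N - m := by omega
            rwa [he] at this
        obtain ⟨B, hB⟩ := hB
        rw [hB, ← mul_assoc, ← pow_add]
        exact Dvd.dvd.mul_right (pow_dvd_pow X (by omega)) B

lemma gauss_sub_inv {N n : ℕ} (h : n ≤ N) :
    X ^ (N - n + 1) ∣ gauss N n - (poch n)⁻¹ := by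
  have e : (poch n)⁻¹ * (poch n * gauss N n - 1) = gauss N n - (poch n)⁻¹ := by
    rw [mul_sub, ← mul_assoc, PowerSeries.inv_mul_cancel _ (constantCoeff_poch_ne n),
      one_mul, mul_one]
  rw [← e]
  exact Dvd.dvd.mul_left (poch_mul_gauss N n h) _

lemma coeff_congr {N : ℕ} {f g : PowerSeries ℚ} (h : X ^ (N + 1) ∣ f - g) :
    coeff N f = coeff N g := by
  have := (PowerSeries.X_pow_dvd_iff.mp h) N (Nat.lt_succ_self N)
  rw [map_sub, sub_eq_zero] at this
  exact this

end

end DurfeeAux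

namespace DurfeeAux

open Finset

open scoped Classical

noncomputable section

lemma poch_inv_prod (n : ℕ) :
    (poch n)⁻¹ = ∏ k ∈ Finset.Icc 1 n, (1 - (X : PowerSeries ℚ) ^ k)⁻¹ := by
  rw [PowerSeries.inv_eq_iff_mul_eq_one (constantCoeff_poch_ne n)]
  rw [poch, ← Finset.prod_mul_distrib]
  apply Finset.prod_eq_one
  intro k hk
  have hk1 : k ≠ 0 := by have := Finset.mem_Icc.mp hk; omega
  apply PowerSeries.inv_mul_cancel
  simp [zero_pow hk1]

lemma card_partition (N : ℕ) :
    (Fintype.card (Nat.Partition N) : ℚ) = coeff N (poch N)⁻¹ := by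
  have h := partialGF_prop ℚ N (Finset.Icc 1 N) (fun i hi => (Finset.mem_Icc.mp hi).1)
    (fun _ => Set.univ) (fun _ _ => trivial)
  have hcard : #{p : Nat.Partition N |
      (∀ j, p.parts.count j ∈ (Set.univ : Set ℕ)) ∧ ∀ j ∈ p.parts, j ∈ Finset.Icc 1 N}
      = Fintype.card (Nat.Partition N) := by
    rw [← Finset.card_univ]
    congr 1
    apply Finset.filter_true_of_mem
    intro p _
    refine ⟨fun j => trivial, fun j hj => Finset.mem_Icc.mpr ⟨p.parts_pos hj, ?_⟩⟩
    have hs := p.parts_sum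
    exact hs ▸ Multiset.single_le_sum (fun _ _ => Nat.zero_le _) _ hj
  rw [← hcard, h]
  congr 1
  rw [poch_inv_prod]
  apply Finset.prod_congr rfl
  intro k hk
  obtain ⟨j, rfl⟩ : ∃ j, k = j + 1 :=
    ⟨k - 1, by have := (Finset.mem_Icc.mp hk).1; omega⟩
  rw [num_series']
  refine congrArg (indicatorSeries ℚ) ?_
  ext m
  simp only [Set.image_univ, Set.mem_range, Set.mem_setOf_eq]
  constructor
  · rintro ⟨a, ha⟩
    exact Dvd.intro_left a ha
  · rintro ⟨c, rfl⟩
    exact ⟨c, mul_comm c (j + 1)⟩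

end

end DurfeeAux

open DurfeeAux in
/-- Euler's identity: `∑_{n ≥ 0} p(n) q^n = ∑_{n ≥ 0} q^{n²} / (q)_n²` as formal power
series (the right side defined coefficientwise; the `n`-th summand has order `n² > N`
for `n > N`). -/
theorem partition_genfun_durfee :
    (PowerSeries.mk fun n => (Fintype.card (Nat.Partition n) : ℚ)) =
      PowerSeries.mk fun N => ∑ n ∈ Finset.range (N + 1),
        coeff N (X ^ (n ^ 2) * ((poch n)⁻¹) ^ 2) := by
  ext N
  rw [coeff_mk, coeff_mk, card_partition]
  have h1 : coeff N ((poch N)⁻¹) = coeff N (gauss (N + N) N) := by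
    apply coeff_congr
    have hd := gauss_sub_inv (N := N + N) (n := N) (by omega)
    have he : N + N - N + 1 = N + 1 := by omega
    rw [he] at hd
    rw [← neg_sub]
    exact dvd_neg.mpr hd
  rw [h1, gauss_vandermonde N N N, map_sum]
  have e : ∀ j ∈ Finset.range (N + 1),
      coeff N (X ^ ((N - j) * (N - j)) * (gauss N j * gauss N (N - j)))
      = (fun n => coeff N (X ^ (n ^ 2) * (gauss N n) ^ 2)) (N - j) := by
    intro j hj
    have hj' : j ≤ N := by simpa [Nat.lt_succ_iff] using hj
    simp only []
    rw [← gauss_symm N j hj', sq, sq]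
  rw [Finset.sum_congr rfl e]
  have hrefl := Finset.sum_range_reflect
    (fun n => coeff N (X ^ (n ^ 2) * (gauss N n) ^ 2)) (N + 1)
  simp only [Nat.add_sub_cancel] at hrefl
  rw [hrefl]
  refine Finset.sum_congr rfl fun n hn => ?_
  have hn' : n ≤ N := by simpa [Nat.lt_succ_iff] using hn
  apply coeff_congr
  obtain ⟨d, hd⟩ := gauss_sub_inv (N := N) (n := n) hn'
  have key : X ^ (n ^ 2) * (gauss N n) ^ 2 - X ^ (n ^ 2) * ((poch n)⁻¹) ^ 2
      = X ^ (n ^ 2 + (N - n + 1)) * ((gauss N n + (poch n)⁻¹) * d) := by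
    have expand : X ^ (n ^ 2) * (gauss N n) ^ 2 - X ^ (n ^ 2) * ((poch n)⁻¹) ^ 2
        = X ^ (n ^ 2) * ((gauss N n + (poch n)⁻¹) * (gauss N n - (poch n)⁻¹)) := by ring
    rw [expand, hd, pow_add]
    ring
  rw [key]
  have hn2 : n ≤ n ^ 2 := Nat.le_self_pow (by norm_num) n
  have hle : N + 1 ≤ n ^ 2 + (N - n + 1) := by
    have h2 : N + 1 ≤ n + (N - n + 1) := by omega
    exact h2.trans (Nat.add_le_add_right hn2 _)
  exact Dvd.dvd.mul_right (pow_dvd_pow X hle) _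
end
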